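/- Let U ⊆ ℂ be a bounded convex open set of diameter ℓ and let f be holomorphic on U and continuous on the closure of U, with f not identically zero. If f has at least n zeros in U counted with multiplicities, then for every k = 0, 1, …, n−1, sup_{z∈U} |f^{(n−k)}(z)| ≤ sup_{z∈U} |f^{(n)}(z)| · ℓ^k / k!. -/

import Mathlib

open intervalIntegral MeasureTheory

namespace Stmt9Aux

noncomputable def J : List ℂ → (ℂ → ℂ) → ℂ
  | [], _ => 0
  | [x], g => g x
  | x :: y :: l, g =>
      ∫ s in (0:ℝ)..1, ((s:ℂ) ^ l.length) * J (y :: l) (fun z => g ((1 - (s:ℂ)) * x + (s:ℂ) * z))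

lemma Jnil (g : ℂ → ℂ) : J [] g = 0 := rfl
lemma Jsingle (x : ℂ) (g : ℂ → ℂ) : J [x] g = g x := rfl

lemma Jcons (x : ℂ) (t : List ℂ) (ht : t ≠ []) (g : ℂ → ℂ) :
    J (x :: t) g = ∫ s in (0:ℝ)..1,
      ((s:ℂ) ^ (t.length - 1)) * J t (fun z => g ((1 - (s:ℂ)) * x + (s:ℂ) * z)) := by
  match t with
  | [] => exact absurd rfl ht
  | y :: l => rfl

/-- Parametric continuity of `J`. -/
lemma Jcont {g : ℂ → ℂ} (hg : Continuous g) :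
    ∀ l : List ℂ, Continuous fun p : ℂ × ℂ => J l (fun z => g (p.1 + p.2 * z))
  | [] => continuous_const
  | [x] => by
      simp only [Jsingle]
      fun_prop
  | x :: y :: l => by
      have IH := Jcont hg (y :: l)
      have : ∀ p : ℂ × ℂ, J (x :: y :: l) (fun z => g (p.1 + p.2 * z)) =
          ∫ s in (0:ℝ)..1, ((s:ℂ) ^ l.length) *
            J (y :: l) (fun z => g ((p.1 + p.2 * ((1 - (s:ℂ)) * x)) + (p.2 * (s:ℂ)) * z)) := by
        intro p
        rw [show J (x :: y :: l) (fun z => g (p.1 + p.2 * z)) = _ from rfl]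
        refine intervalIntegral.integral_congr fun s _ => ?_
        congr 1
        congr 1
        ext z
        ring_nf
      rw [show (fun p : ℂ × ℂ => J (x :: y :: l) (fun z => g (p.1 + p.2 * z))) = _ from
        funext this]
      apply intervalIntegral.continuous_parametric_intervalIntegral_of_continuous'
      have : Continuous fun q : (ℂ × ℂ) × ℝ =>
          ((q.2:ℂ) ^ l.length) *
          J (y :: l) (fun z => g ((q.1.1 + q.1.2 * ((1 - (q.2:ℂ)) * x)) + (q.1.2 * (q.2:ℂ)) * z)) := by
        have hc : Continuous fun q : (ℂ × ℂ) × ℝ => ((q.2:ℝ):ℂ) :=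
          Complex.continuous_ofReal.comp continuous_snd
        apply Continuous.mul
        · exact hc.pow _
        · refine IH.comp (Continuous.prodMk ?_ ?_)
          · exact (continuous_fst.comp continuous_fst).add
              ((continuous_snd.comp continuous_fst).mul
                (((continuous_const.sub hc)).mul continuous_const))
          · exact (continuous_snd.comp continuous_fst).mul hc
      exact this


lemma convex_comb_mem {V : Set ℂ} (hVc : Convex ℝ V) {x z : ℂ} (hx : x ∈ V) (hz : z ∈ V)
    {s : ℝ} (h0 : 0 ≤ s) (h1 : s ≤ 1) : (1 - (s:ℂ)) * x + (s:ℂ) * z ∈ V := by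
  have h := hVc hx hz (by linarith : (0:ℝ) ≤ 1 - s) h0 (by ring)
  have e : (1 - (s:ℂ)) * x + (s:ℂ) * z = (1 - s) • x + s • z := by
    rw [Complex.real_smul, Complex.real_smul]
    push_cast
    ring
  rw [e]
  exact h

lemma Jsmul (c : ℂ) : ∀ (l : List ℂ) (g : ℂ → ℂ), J l (fun z => c * g z) = c * J l g
  | [], g => by simp [J]
  | [x], g => rfl
  | x :: y :: l, g => by
      show (∫ s in (0:ℝ)..1, ((s:ℂ) ^ l.length) *
          J (y :: l) (fun z => c * g ((1 - (s:ℂ)) * x + (s:ℂ) * z))) = c * _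
      rw [show (fun s : ℝ => ((s:ℂ) ^ l.length) *
          J (y :: l) (fun z => c * g ((1 - (s:ℂ)) * x + (s:ℂ) * z)))
          = fun s : ℝ => c * (((s:ℂ) ^ l.length) *
            J (y :: l) (fun z => g ((1 - (s:ℂ)) * x + (s:ℂ) * z))) from ?_]
      · rw [intervalIntegral.integral_const_mul]
        rfl
      · funext s
        rw [Jsmul c (y :: l) (fun z => g ((1 - (s:ℂ)) * x + (s:ℂ) * z))]
        ring

lemma Jreplicate (x : ℂ) (g : ℂ → ℂ) :
    ∀ m : ℕ, J (List.replicate (m+1) x) g = g x / (m.factorial : ℂ)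
  | 0 => by simp [List.replicate, Jsingle]
  | (m+1) => by
      show J (x :: x :: List.replicate m x) g = _
      have hlen : (List.replicate m x).length = m := List.length_replicate
      show (∫ s in (0:ℝ)..1, ((s:ℂ) ^ (List.replicate m x).length) *
          J (x :: List.replicate m x) (fun z => g ((1 - (s:ℂ)) * x + (s:ℂ) * z))) = _
      have key : ∀ s : ℝ, J (x :: List.replicate m x) (fun z => g ((1 - (s:ℂ)) * x + (s:ℂ) * z))
          = g x / (m.factorial : ℂ) := by
        intro s
        have := Jreplicate x (fun z => g ((1 - (s:ℂ)) * x + (s:ℂ) * z)) m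
        rw [show List.replicate (m+1) x = x :: List.replicate m x from rfl] at this
        rw [this]
        congr 2
        ring
      calc (∫ s in (0:ℝ)..1, ((s:ℂ) ^ (List.replicate m x).length) *
              J (x :: List.replicate m x) (fun z => g ((1 - (s:ℂ)) * x + (s:ℂ) * z)))
          = ∫ s in (0:ℝ)..1, ((s:ℂ) ^ m) * (g x / (m.factorial : ℂ)) := by
            refine intervalIntegral.integral_congr fun s _ => ?_
            rw [key s, hlen]
        _ = (∫ s in (0:ℝ)..1, ((s:ℂ) ^ m)) * (g x / (m.factorial : ℂ)) :=
            intervalIntegral.integral_mul_const _ _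
        _ = g x / ((m+1).factorial : ℂ) := by
            have : (∫ s in (0:ℝ)..1, ((s:ℂ) ^ m)) = ((∫ s in (0:ℝ)..1, s ^ m : ℝ) : ℂ) := by
              rw [← intervalIntegral.integral_ofReal]
              push_cast
              rfl
            rw [this, integral_pow]
            have hm : ((m.factorial : ℂ)) ≠ 0 := Nat.cast_ne_zero.mpr m.factorial_ne_zero
            have hm1 : ((m:ℂ) + 1) ≠ 0 := by
              have : ((m:ℂ) + 1) = ((m+1 : ℕ) : ℂ) := by push_cast; ring
              rw [this]
              exact Nat.cast_ne_zero.mpr (Nat.succ_ne_zero m)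
            rw [Nat.factorial_succ]
            push_cast
            field_simp
            simp

lemma Jbound {V : Set ℂ} (hVc : Convex ℝ V) :
    ∀ (l : List ℂ) (g : ℂ → ℂ), Continuous g → ∀ (C : ℝ), (∀ z ∈ V, ‖g z‖ ≤ C) →
      l ≠ [] → (∀ z ∈ l, z ∈ V) →
      ‖J l g‖ ≤ C / ((l.length - 1).factorial : ℝ)
  | [], g, hg, C, hC, hne, hl => absurd rfl hne
  | [x], g, hg, C, hC, hne, hl => by
      simpa [Jsingle] using hC x (hl x (by simp))
  | x :: y :: l, g, hg, C, hC, hne, hl => by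
      have hxV : x ∈ V := hl x (by simp)
      have hC0 : 0 ≤ C := le_trans (norm_nonneg _) (hC x hxV)
      set L := l.length with hL
      have hlen : (y :: l).length - 1 = L := by simp [hL]
      show ‖∫ s in (0:ℝ)..1, ((s:ℂ) ^ L) *
          J (y :: l) (fun z => g ((1 - (s:ℂ)) * x + (s:ℂ) * z))‖ ≤ _
      have key : ∀ s ∈ Set.Ioc (0:ℝ) 1,
          ‖((s:ℂ) ^ L) * J (y :: l) (fun z => g ((1 - (s:ℂ)) * x + (s:ℂ) * z))‖
            ≤ s ^ L * (C / (L.factorial : ℝ)) := by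
        intro s hs
        rw [norm_mul, norm_pow]
        have h1 : ‖(s:ℂ)‖ = s := by
          rw [Complex.norm_real, Real.norm_eq_abs, abs_of_pos hs.1]
        rw [h1]
        refine mul_le_mul_of_nonneg_left ?_ (pow_nonneg (le_of_lt hs.1) L)
        have := Jbound hVc (y :: l) (fun z => g ((1 - (s:ℂ)) * x + (s:ℂ) * z))
          (by fun_prop) C
          (fun z hz => hC _ (convex_comb_mem hVc hxV hz (le_of_lt hs.1) hs.2))
          (by simp) (fun z hz => hl z (List.mem_cons_of_mem x hz))
        rwa [hlen] at this
      have hmono : ‖∫ s in (0:ℝ)..1, ((s:ℂ) ^ L) *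
          J (y :: l) (fun z => g ((1 - (s:ℂ)) * x + (s:ℂ) * z))‖
          ≤ ∫ s in (0:ℝ)..1, s ^ L * (C / (L.factorial : ℝ)) := by
        have hbd : ‖∫ s in (0:ℝ)..1, ((s:ℂ) ^ L) *
            J (y :: l) (fun z => g ((1 - (s:ℂ)) * x + (s:ℂ) * z))‖
            ≤ |∫ s in (0:ℝ)..1, s ^ L * (C / (L.factorial : ℝ))| := by
          apply intervalIntegral.norm_integral_le_abs_of_norm_le
          · filter_upwards [MeasureTheory.ae_restrict_mem measurableSet_uIoc] with s hs
            exact key s (by rwa [Set.uIoc_of_le (by norm_num : (0:ℝ) ≤ 1)] at hs)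
          · apply Continuous.intervalIntegrable
            fun_prop
        refine le_trans hbd (le_of_eq (abs_of_nonneg ?_))
        apply intervalIntegral.integral_nonneg (by norm_num)
        intro s hs
        have : 0 ≤ s ^ L := pow_nonneg hs.1 L
        positivity
      refine le_trans hmono ?_
      rw [intervalIntegral.integral_mul_const, integral_pow]
      have hfac : ((x :: y :: l).length - 1).factorial = (L+1) * L.factorial := by
        simp [hL, Nat.factorial_succ]
      rw [hfac]
      have h2 : (0:ℝ) < (L.factorial : ℝ) := by exact_mod_cast L.factorial_pos
      apply le_of_eq
      push_cast
      rw [one_pow, zero_pow (Nat.succ_ne_zero L)]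
      field_simp
      ring


/-- continuity in the parameter `s` of the standard integrand shapes -/
lemma Jcont_aux {g : ℂ → ℂ} (hg : Continuous g) (l : List ℂ) (x : ℂ) (k : ℕ) :
    Continuous fun s : ℝ => ((s:ℂ) ^ k) * J l (fun z => g ((1 - (s:ℂ)) * x + (s:ℂ) * z)) := by
  have hc : Continuous fun s : ℝ => ((s:ℝ):ℂ) := Complex.continuous_ofReal
  have h1 : Continuous fun s : ℝ => J l (fun z => g (((1 - (s:ℂ)) * x) + (s:ℂ) * z)) :=
    (Jcont hg l).comp (Continuous.prodMk ((continuous_const.sub hc).mul continuous_const) hc)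
  exact (hc.pow k).mul h1

lemma Jrec {V : Set ℂ} (hVc : Convex ℝ V) :
    ∀ (l : List ℂ) (g h : ℂ → ℂ), Continuous g → Continuous h →
      (∀ z ∈ V, HasDerivAt g (h z) z) → (∀ z ∈ l, z ∈ V) →
      ∀ a, a ∈ V → ∀ b, b ∈ V →
      J (l ++ [a, b]) h * (b - a) = J (l ++ [b]) g - J (l ++ [a]) g
  | [], g, h, hgc, hhc, hd, hl, a, ha, b, hb => by
      simp only [List.nil_append]
      have e1 : J [a, b] h = ∫ s in (0:ℝ)..1, h ((1 - (s:ℂ)) * a + (s:ℂ) * b) := by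
        show (∫ s in (0:ℝ)..1, ((s:ℂ) ^ (List.length ([] : List ℂ))) *
            J [b] (fun z => h ((1 - (s:ℂ)) * a + (s:ℂ) * z))) = _
        refine intervalIntegral.integral_congr fun s _ => ?_
        simp [Jsingle]
      have hderiv : ∀ s ∈ Set.uIcc (0:ℝ) 1,
          HasDerivAt (fun s : ℝ => g (a + s • (b - a))) (h (a + s • (b - a)) * (b - a)) s := by
        intro s hs
        rw [Set.uIcc_of_le (by norm_num : (0:ℝ) ≤ 1)] at hs
        have hpt : a + s • (b - a) ∈ V := hVc.add_smul_sub_mem ha hb hs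
        have hγ : HasDerivAt (fun s : ℝ => a + s • (b - a)) (b - a) s := by
          simpa using ((hasDerivAt_id s).smul_const (b - a)).const_add a
        have hg' := ((hd _ hpt).hasFDerivAt.restrictScalars ℝ).comp_hasDerivAt s hγ
        convert hg' using 1
        · rfl
        all_goals simp [Function.comp_def, mul_comm]
      have hint : IntervalIntegrable (fun s : ℝ => h (a + s • (b - a)) * (b - a)) volume 0 1 := by
        apply Continuous.intervalIntegrable
        have : Continuous fun s : ℝ => a + s • (b - a) := by fun_prop
        exact (hhc.comp this).mul continuous_const
      have e2 := intervalIntegral.integral_eq_sub_of_hasDerivAt hderiv hint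
      simp only [one_smul, zero_smul, add_zero] at e2
      have e3 : a + (b - a) = b := by ring
      rw [e3] at e2
      calc J [a, b] h * (b - a)
          = ∫ s in (0:ℝ)..1, h ((1 - (s:ℂ)) * a + (s:ℂ) * b) * (b - a) := by
            rw [e1, intervalIntegral.integral_mul_const]
        _ = ∫ s in (0:ℝ)..1, h (a + s • (b - a)) * (b - a) := by
            refine intervalIntegral.integral_congr fun s _ => ?_
            congr 2
            rw [Complex.real_smul]
            push_cast
            ring
        _ = g b - g a := e2
        _ = J [b] g - J [a] g := rfl
  | x :: l', g, h, hgc, hhc, hd, hl, a, ha, b, hb => by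
      have hxV : x ∈ V := hl x (by simp)
      set L := l'.length with hL
      have hne1 : l' ++ [a, b] ≠ [] := by simp
      have hne2 : l' ++ [b] ≠ [] := by simp
      have hne3 : l' ++ [a] ≠ [] := by simp
      have hlen1 : (l' ++ [a, b]).length - 1 = L + 1 := by simp [hL]
      have hlen2 : (l' ++ [b]).length - 1 = L := by simp [hL]
      have hlen3 : (l' ++ [a]).length - 1 = L := by simp [hL]
      have e1 : J ((x :: l') ++ [a, b]) h = ∫ s in (0:ℝ)..1,
          ((s:ℂ) ^ (L+1)) * J (l' ++ [a, b]) (fun z => h ((1 - (s:ℂ)) * x + (s:ℂ) * z)) := by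
        rw [List.cons_append, Jcons x _ hne1, hlen1]
      have key : ∀ s : ℝ, s ∈ Set.Ioc (0:ℝ) 1 →
          (((s:ℂ) ^ (L+1)) * J (l' ++ [a, b]) (fun z => h ((1 - (s:ℂ)) * x + (s:ℂ) * z))) * (b - a)
          = ((s:ℂ) ^ L) * J (l' ++ [b]) (fun z => g ((1 - (s:ℂ)) * x + (s:ℂ) * z))
            - ((s:ℂ) ^ L) * J (l' ++ [a]) (fun z => g ((1 - (s:ℂ)) * x + (s:ℂ) * z)) := by
        intro s hs
        have hA : ∀ z ∈ V, HasDerivAt (fun z => g ((1 - (s:ℂ)) * x + (s:ℂ) * z))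
            ((s:ℂ) * h ((1 - (s:ℂ)) * x + (s:ℂ) * z)) z := by
          intro z hz
          have hmem := convex_comb_mem hVc hxV hz (le_of_lt hs.1) hs.2
          have hin : HasDerivAt (fun z : ℂ => (1 - (s:ℂ)) * x + (s:ℂ) * z) (s:ℂ) z := by
            simpa using ((hasDerivAt_id z).const_mul (s:ℂ)).const_add ((1 - (s:ℂ)) * x)
          have := (hd _ hmem).comp z hin
          simpa [Function.comp_def, mul_comm] using this
        have IH := Jrec hVc l' (fun z => g ((1 - (s:ℂ)) * x + (s:ℂ) * z))
          (fun z => (s:ℂ) * h ((1 - (s:ℂ)) * x + (s:ℂ) * z))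
          (by fun_prop) (by fun_prop) hA
          (fun z hz => hl z (List.mem_cons_of_mem x hz)) a ha b hb
        rw [Jsmul (s:ℂ) (l' ++ [a, b]) (fun z => h ((1 - (s:ℂ)) * x + (s:ℂ) * z))] at IH
        calc (((s:ℂ) ^ (L+1)) * J (l' ++ [a, b])
                (fun z => h ((1 - (s:ℂ)) * x + (s:ℂ) * z))) * (b - a)
            = ((s:ℂ) ^ L) * (((s:ℂ) * J (l' ++ [a, b])
                (fun z => h ((1 - (s:ℂ)) * x + (s:ℂ) * z))) * (b - a)) := by
              rw [pow_succ]; ring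
          _ = ((s:ℂ) ^ L) * (J (l' ++ [b]) (fun z => g ((1 - (s:ℂ)) * x + (s:ℂ) * z))
              - J (l' ++ [a]) (fun z => g ((1 - (s:ℂ)) * x + (s:ℂ) * z))) := by rw [IH]
          _ = _ := by ring
      calc J ((x :: l') ++ [a, b]) h * (b - a)
          = ∫ s in (0:ℝ)..1, (((s:ℂ) ^ (L+1)) *
              J (l' ++ [a, b]) (fun z => h ((1 - (s:ℂ)) * x + (s:ℂ) * z))) * (b - a) := by
            rw [e1, intervalIntegral.integral_mul_const]
        _ = ∫ s in (0:ℝ)..1,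
              (((s:ℂ) ^ L) * J (l' ++ [b]) (fun z => g ((1 - (s:ℂ)) * x + (s:ℂ) * z))
              - ((s:ℂ) ^ L) * J (l' ++ [a]) (fun z => g ((1 - (s:ℂ)) * x + (s:ℂ) * z))) := by
            apply intervalIntegral.integral_congr_ae
            filter_upwards with s hs
            exact key s (by rwa [Set.uIoc_of_le (by norm_num : (0:ℝ) ≤ 1)] at hs)
        _ = (∫ s in (0:ℝ)..1, ((s:ℂ) ^ L) *
                J (l' ++ [b]) (fun z => g ((1 - (s:ℂ)) * x + (s:ℂ) * z)))
            - ∫ s in (0:ℝ)..1, ((s:ℂ) ^ L) *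
                J (l' ++ [a]) (fun z => g ((1 - (s:ℂ)) * x + (s:ℂ) * z)) := by
            apply intervalIntegral.integral_sub
            · exact (Jcont_aux hgc (l' ++ [b]) x L).intervalIntegrable _ _
            · exact (Jcont_aux hgc (l' ++ [a]) x L).intervalIntegrable _ _
        _ = J ((x :: l') ++ [b]) g - J ((x :: l') ++ [a]) g := by
            rw [List.cons_append, Jcons x _ hne2, hlen2, List.cons_append, Jcons x _ hne3, hlen3]


lemma triangle_swap {F : ℝ → ℝ → ℂ} (hF : Continuous fun p : ℝ × ℝ => F p.1 p.2) :
    (∫ s in (0:ℝ)..1, ∫ b in (0:ℝ)..s, F s b) =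
      ∫ s in (0:ℝ)..1, ∫ b in (0:ℝ)..s, F (1-b) (1-s) := by
  set T : Set (ℝ × ℝ) := {p | 0 < p.2 ∧ p.2 ≤ p.1 ∧ p.1 ≤ 1} with hT
  have hTmeas : MeasurableSet T := by
    apply MeasurableSet.inter
    · exact (isOpen_lt continuous_const continuous_snd).measurableSet
    · exact ((isClosed_le continuous_snd continuous_fst).inter
        (isClosed_le continuous_fst continuous_const)).measurableSet
  set ψ : ℝ × ℝ → ℂ := T.indicator (fun p => F p.1 p.2) with hψ
  have hTsub : T ⊆ Set.Icc (0:ℝ) 1 ×ˢ Set.Icc (0:ℝ) 1 := by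
    rintro ⟨s, b⟩ ⟨h1, h2, h3⟩
    exact ⟨⟨le_trans (le_of_lt h1) h2, h3⟩, ⟨le_of_lt h1, le_trans h2 h3⟩⟩
  have hψint : Integrable ψ (volume : Measure (ℝ × ℝ)) := by
    apply IntegrableOn.integrable_indicator _ hTmeas
    exact ((hF.continuousOn).integrableOn_compact (isCompact_Icc.prod isCompact_Icc)).mono_set hTsub
  -- Step A : LHS = ∫ s, ∫ b, ψ (s, b)
  have stepA : (∫ s in (0:ℝ)..1, ∫ b in (0:ℝ)..s, F s b) = ∫ s : ℝ, ∫ b : ℝ, ψ (s, b) := by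
    have hzero : ∀ s : ℝ, s ∉ Set.Ioc (0:ℝ) 1 → (∫ b : ℝ, ψ (s, b)) = 0 := by
      intro s hs
      have : (fun b : ℝ => ψ (s, b)) = 0 := by
        funext b
        apply Set.indicator_of_notMem
        rintro ⟨h1, h2, h3⟩
        exact hs ⟨lt_of_lt_of_le h1 h2, h3⟩
      rw [this]
      exact MeasureTheory.integral_zero ℝ ℂ
    have h1 : (∫ s : ℝ, ∫ b : ℝ, ψ (s, b)) = ∫ s in Set.Ioc (0:ℝ) 1, ∫ b : ℝ, ψ (s, b) := by
      rw [← MeasureTheory.integral_indicator measurableSet_Ioc]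
      congr 1
      funext s
      rw [Set.indicator_apply]
      split_ifs with h
      · rfl
      · exact hzero s h
    rw [h1, intervalIntegral.integral_of_le (by norm_num : (0:ℝ) ≤ 1)]
    apply MeasureTheory.setIntegral_congr_fun measurableSet_Ioc
    intro s hs
    show (∫ b in (0:ℝ)..s, F s b) = ∫ b : ℝ, ψ (s, b)
    have : (∫ b : ℝ, ψ (s, b)) = ∫ b in Set.Ioc (0:ℝ) s, F s b := by
      rw [← MeasureTheory.integral_indicator measurableSet_Ioc]
      congr 1
      funext b
      rw [hψ]
      rw [Set.indicator_apply, Set.indicator_apply]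
      have : (s, b) ∈ T ↔ b ∈ Set.Ioc (0:ℝ) s := by
        constructor
        · rintro ⟨u1, u2, u3⟩; exact ⟨u1, u2⟩
        · rintro ⟨u1, u2⟩; exact ⟨u1, u2, hs.2⟩
      simp only [this]
    rw [this, intervalIntegral.integral_of_le (le_of_lt hs.1)]
  -- Step B : swap
  have stepB : (∫ s : ℝ, ∫ b : ℝ, ψ (s, b)) = ∫ b : ℝ, ∫ s : ℝ, ψ (s, b) := by
    apply MeasureTheory.integral_integral_swap
    show Integrable (Function.uncurry fun x y => ψ (x, y)) _
    have he : Function.uncurry (fun x y => ψ (x, y)) = ψ := rfl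
    rw [he, ← MeasureTheory.Measure.volume_eq_prod]
    exact hψint
  -- Step C : inner back to interval integrals
  have stepC : (∫ b : ℝ, ∫ s : ℝ, ψ (s, b)) = ∫ b in (0:ℝ)..1, ∫ s in b..(1:ℝ), F s b := by
    have hzero : ∀ b : ℝ, b ∉ Set.Ioc (0:ℝ) 1 → (∫ s : ℝ, ψ (s, b)) = 0 := by
      intro b hb
      have : (fun s : ℝ => ψ (s, b)) = 0 := by
        funext s
        apply Set.indicator_of_notMem
        rintro ⟨h1, h2, h3⟩
        exact hb ⟨h1, le_trans h2 h3⟩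
      rw [this]
      exact MeasureTheory.integral_zero ℝ ℂ
    have h1 : (∫ b : ℝ, ∫ s : ℝ, ψ (s, b)) = ∫ b in Set.Ioc (0:ℝ) 1, ∫ s : ℝ, ψ (s, b) := by
      rw [← MeasureTheory.integral_indicator measurableSet_Ioc]
      congr 1
      funext b
      rw [Set.indicator_apply]
      split_ifs with h
      · rfl
      · exact hzero b h
    rw [h1, intervalIntegral.integral_of_le (by norm_num : (0:ℝ) ≤ 1)]
    apply MeasureTheory.setIntegral_congr_fun measurableSet_Ioc
    intro b hb
    show (∫ s : ℝ, ψ (s, b)) = ∫ s in b..(1:ℝ), F s b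
    have h2 : (∫ s : ℝ, ψ (s, b)) = ∫ s in Set.Icc b 1, F s b := by
      rw [← MeasureTheory.integral_indicator measurableSet_Icc]
      congr 1
      funext s
      rw [hψ]
      rw [Set.indicator_apply, Set.indicator_apply]
      have : (s, b) ∈ T ↔ s ∈ Set.Icc b 1 := by
        constructor
        · rintro ⟨u1, u2, u3⟩; exact ⟨u2, u3⟩
        · rintro ⟨u1, u2⟩; exact ⟨hb.1, u1, u2⟩
      simp only [this]
    rw [h2, MeasureTheory.integral_Icc_eq_integral_Ioc,
      ← intervalIntegral.integral_of_le hb.2]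
  rw [stepA, stepB, stepC]
  -- Step E/F : reflections
  have stepE : ∀ b : ℝ, (∫ s in b..(1:ℝ), F s b) = ∫ σ in (0:ℝ)..(1-b), F (1-σ) b := by
    intro b
    have := intervalIntegral.integral_comp_sub_left (a := (0:ℝ)) (b := 1-b)
      (fun s => F s b) 1
    rw [this]
    norm_num
  have stepF : (∫ b in (0:ℝ)..1, ∫ σ in (0:ℝ)..(1-b), F (1-σ) b) =
      ∫ u in (0:ℝ)..1, ∫ σ in (0:ℝ)..u, F (1-σ) (1-u) := by
    have := intervalIntegral.integral_comp_sub_left (a := (0:ℝ)) (b := 1)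
      (fun b => ∫ σ in (0:ℝ)..(1-b), F (1-σ) b) 1
    rw [show (1:ℝ) - 1 = 0 from by norm_num, show (1:ℝ) - 0 = 1 from by norm_num] at this
    rw [← this]
    apply intervalIntegral.integral_congr
    intro u _
    simp only [sub_sub_cancel]
  calc (∫ b in (0:ℝ)..1, ∫ s in b..(1:ℝ), F s b)
      = ∫ b in (0:ℝ)..1, ∫ σ in (0:ℝ)..(1-b), F (1-σ) b := by
        apply intervalIntegral.integral_congr
        intro b _
        exact stepE b
    _ = ∫ u in (0:ℝ)..1, ∫ σ in (0:ℝ)..u, F (1-σ) (1-u) := stepF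


lemma Jswap {g : ℂ → ℂ} (hg : Continuous g) (x y : ℂ) (t : List ℂ) :
    J (x :: y :: t) g = J (y :: x :: t) g := by
  match t with
  | [] =>
    have e : ∀ X Y : ℂ, J [X, Y] g = ∫ s in (0:ℝ)..1, g ((1 - (s:ℂ)) * X + (s:ℂ) * Y) := by
      intro X Y
      show (∫ s in (0:ℝ)..1, ((s:ℂ) ^ (List.length ([] : List ℂ))) *
          J [Y] (fun z => g ((1 - (s:ℂ)) * X + (s:ℂ) * z))) = _
      refine intervalIntegral.integral_congr fun s _ => ?_
      simp [Jsingle]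
    rw [e x y, e y x]
    have := intervalIntegral.integral_comp_sub_left (a := (0:ℝ)) (b := 1)
      (fun u : ℝ => g ((1 - (u:ℂ)) * y + (u:ℂ) * x)) 1
    rw [show (1:ℝ) - 1 = 0 from by norm_num, show (1:ℝ) - 0 = 1 from by norm_num] at this
    rw [← this]
    refine intervalIntegral.integral_congr fun s _ => ?_
    congr 1
    push_cast
    ring
  | w :: t' =>
    set m := (w :: t').length with hm
    have hmpos : 1 ≤ m := by simp [hm]
    have ht : (w :: t') ≠ [] := by simp
    set P : ℂ → ℂ → ℝ → ℝ → ℂ := fun X Y a b =>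
      J (w :: t') (fun z => g (((a:ℂ) * X + (b:ℂ) * Y) + (1 - (a:ℂ) - (b:ℂ)) * z)) with hP
    have hPcont : ∀ X Y : ℂ, Continuous fun p : ℝ × ℝ => P X Y p.1 p.2 := by
      intro X Y
      have hc : Continuous fun p : ℝ × ℝ => ((p.1:ℝ):ℂ) :=
        Complex.continuous_ofReal.comp continuous_fst
      have hc2 : Continuous fun p : ℝ × ℝ => ((p.2:ℝ):ℂ) :=
        Complex.continuous_ofReal.comp continuous_snd
      exact (Jcont hg (w :: t')).comp (Continuous.prodMk
        ((hc.mul continuous_const).add (hc2.mul continuous_const))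
        ((continuous_const.sub hc).sub hc2))
    have main : ∀ X Y : ℂ, J (X :: Y :: w :: t') g =
        ∫ s in (0:ℝ)..1, ∫ b in (0:ℝ)..s, (((s - b : ℝ)):ℂ)^(m-1) * P X Y (1-s) b := by
      intro X Y
      show (∫ s in (0:ℝ)..1, ((s:ℂ) ^ m) *
          J (Y :: w :: t') (fun z => g ((1 - (s:ℂ)) * X + (s:ℂ) * z))) = _
      refine intervalIntegral.integral_congr fun s _ => ?_
      show ((s:ℂ) ^ m) * J (Y :: w :: t') (fun z => g ((1 - (s:ℂ)) * X + (s:ℂ) * z)) = _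
      -- unfold inner once
      rw [Jcons Y (w :: t') ht]
      -- rewrite inner J as P
      have e1 : ∀ u : ℝ, J (w :: t')
            (fun z => g ((1 - (s:ℂ)) * X + (s:ℂ) * ((1 - (u:ℂ)) * Y + (u:ℂ) * z)))
          = P X Y (1-s) (s*(1-u)) := by
        intro u
        rw [hP]
        congr 1
        funext z
        congr 1
        push_cast
        ring
      set Φ : ℝ → ℂ := fun v => (((1 - v : ℝ)):ℂ)^(m-1) * P X Y (1-s) (s*v) with hΦ
      have e2 : (∫ u in (0:ℝ)..1, ((u:ℂ) ^ ((w :: t').length - 1)) * J (w :: t')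
            (fun z => g ((1 - (s:ℂ)) * X + (s:ℂ) * ((1 - (u:ℂ)) * Y + (u:ℂ) * z))))
          = ∫ u in (0:ℝ)..1, Φ (1 - u) := by
        refine intervalIntegral.integral_congr fun u _ => ?_
        rw [e1 u, hΦ]
        show ((u:ℂ) ^ ((w::t').length - 1)) * P X Y (1-s) (s*(1-u))
          = (((1 - (1-u) : ℝ)):ℂ)^(m-1) * P X Y (1-s) (s*(1-u))
        congr 2
        · push_cast; ring
      have e3 : (∫ u in (0:ℝ)..1, Φ (1 - u)) = ∫ v in (0:ℝ)..1, Φ v := by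
        have := intervalIntegral.integral_comp_sub_left (a := (0:ℝ)) (b := 1) Φ 1
        rw [show (1:ℝ) - 1 = 0 from by norm_num, show (1:ℝ) - 0 = 1 from by norm_num] at this
        exact this
      set G : ℝ → ℂ := fun b => (((s - b : ℝ)):ℂ)^(m-1) * P X Y (1-s) b with hG
      have e4 : (∫ b in (0:ℝ)..s, G b) = ((s:ℂ) ^ m) * ∫ v in (0:ℝ)..1, Φ v := by
        have hsm := intervalIntegral.smul_integral_comp_mul_left (a := (0:ℝ)) (b := 1) G s
        rw [mul_zero, mul_one] at hsm
        rw [← hsm]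
        have e5 : (∫ v in (0:ℝ)..1, G (s * v)) = ∫ v in (0:ℝ)..1, ((s:ℂ)^(m-1)) * Φ v := by
          refine intervalIntegral.integral_congr fun v _ => ?_
          rw [hG, hΦ]
          show (((s - s*v : ℝ)):ℂ)^(m-1) * P X Y (1-s) (s*v) = _
          have : ((s - s*v : ℝ) : ℂ) = (s:ℂ) * ((1 - v : ℝ):ℂ) := by push_cast; ring
          rw [this, mul_pow]
          ring
        rw [e5, intervalIntegral.integral_const_mul]
        rw [Complex.real_smul]
        rw [← mul_assoc, ← pow_succ']
        have hmm : m - 1 + 1 = m := by omega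
        rw [hmm]
      rw [e2, e3, ← e4]
    rw [main x y, main y x]
    have hF : Continuous fun p : ℝ × ℝ =>
        (((p.1 - p.2 : ℝ)):ℂ)^(m-1) * P x y (1-p.1) p.2 := by
      have h1 : Continuous fun p : ℝ × ℝ => (((p.1 - p.2 : ℝ)):ℂ) :=
        Complex.continuous_ofReal.comp (continuous_fst.sub continuous_snd)
      exact (h1.pow _).mul ((hPcont x y).comp
        ((continuous_const.sub continuous_fst).prodMk continuous_snd))
    have := triangle_swap (F := fun s b => (((s - b : ℝ)):ℂ)^(m-1) * P x y (1-s) b) hF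
    rw [this]
    refine intervalIntegral.integral_congr fun s _ => ?_
    refine intervalIntegral.integral_congr fun b _ => ?_
    have h1 : ((1-b) - (1-s) : ℝ) = s - b := by ring
    have h2 : (1 - (1-b) : ℝ) = b := by ring
    show ((((1-b) - (1-s) : ℝ)):ℂ)^(m-1) * P x y (1-(1-b)) (1-s)
      = (((s - b : ℝ)):ℂ)^(m-1) * P y x (1-s) b
    rw [h1, h2]
    congr 1
    show J (w :: t') (fun z => g (((b:ℝ):ℂ) * x + (((1-s:ℝ)):ℂ) * y
        + (1 - ((b:ℝ):ℂ) - (((1-s:ℝ)):ℂ)) * z))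
      = J (w :: t') (fun z => g ((((1-s:ℝ)):ℂ) * y + ((b:ℝ):ℂ) * x
        + (1 - (((1-s:ℝ)):ℂ) - ((b:ℝ):ℂ)) * z))
    congr 1
    funext z
    congr 1
    push_cast
    ring


lemma Jperm : ∀ {l l' : List ℂ}, l.Perm l' → ∀ g : ℂ → ℂ, Continuous g → J l g = J l' g := by
  intro l l' p
  induction p with
  | nil => intro g hg; rfl
  | cons x p ih =>
      intro g hg
      rename_i l₁ l₂
      match l₁, l₂, p with
      | [], [], _ => rfl
      | [], b :: t, p => exact absurd p.length_eq (by simp)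
      | a :: t, [], p => exact absurd p.length_eq (by simp)
      | a :: t, b :: t', p =>
        rw [Jcons x (a :: t) (by simp), Jcons x (b :: t') (by simp)]
        have hl : (a :: t).length = (b :: t').length := p.length_eq
        refine intervalIntegral.integral_congr fun s _ => ?_
        rw [hl, ih (fun z => g ((1 - (s:ℂ)) * x + (s:ℂ) * z)) (by fun_prop)]
  | swap a b t => intro g hg; exact Jswap hg b a t
  | trans p q ih1 ih2 => intro g hg; exact (ih1 g hg).trans (ih2 g hg)

lemma Jzero {V : Set ℂ} (hVc : Convex ℝ V) (G : ℕ → ℂ → ℂ) (hGc : ∀ j, Continuous (G j))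
    (hGd : ∀ j, ∀ z ∈ V, HasDerivAt (G j) (G (j+1) z) z) :
    ∀ (N : ℕ) (S : List ℂ), S.length ≤ N → S ≠ [] → (∀ z ∈ S, z ∈ V) →
      (∀ a ∈ S, ∀ p < S.count a, G p a = 0) → J S (G (S.length - 1)) = 0 := by
  intro N
  induction N with
  | zero =>
      intro S h1 h2 _ _
      exact absurd (List.length_eq_zero_iff.mp (Nat.le_zero.mp h1)) h2
  | succ N ih =>
      intro S hlen hne hSV hcnt
      set a := S.head hne with ha
      have haS : a ∈ S := List.head_mem hne
      by_cases hconst : ∀ b ∈ S, b = a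
      · have hrep : S = List.replicate S.length a := List.eq_replicate_of_mem hconst
        obtain ⟨k, hk⟩ : ∃ k, S.length = k + 1 :=
          Nat.exists_eq_succ_of_ne_zero (by simpa using List.length_pos_iff.mpr hne |>.ne')
        have hcount : S.count a = k + 1 := by
          rw [hrep, hk]
          simp [List.count_replicate_self]
        have hz : G k a = 0 := hcnt a haS k (by omega)
        rw [hrep, hk]
        simp only [List.length_replicate, Nat.add_sub_cancel]
        rw [Jreplicate a (G k) k, hz, zero_div]
      · push_neg at hconst
        obtain ⟨b, hbS, hbne⟩ := hconst
        have hbS' : b ∈ S.erase a := (List.mem_erase_of_ne hbne).mpr hbS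
        set S₂ := (S.erase a).erase b with hS₂
        have p1 : S.Perm (a :: S.erase a) := List.perm_cons_erase haS
        have p2 : (S.erase a).Perm (b :: S₂) := List.perm_cons_erase hbS'
        have pS : S.Perm (S₂ ++ [a, b]) := by
          refine (p1.trans (List.Perm.cons a p2)).trans ?_
          have : a :: b :: S₂ = [a, b] ++ S₂ := rfl
          rw [this]
          exact List.perm_append_comm
        have hLen : S.length = S₂.length + 2 := by
          have := pS.length_eq
          simpa using this
        have hmemS : ∀ z, z ∈ S₂ ++ [a, b] → z ∈ S := fun z hz => pS.symm.subset hz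
        have hrec := Jrec hVc S₂ (G S₂.length) (G (S₂.length + 1)) (hGc _) (hGc _)
          (hGd S₂.length)
          (fun z hz => hSV z (hmemS z (by simp [hz])))
          a (hSV a haS) b (hSV b hbS)
        -- both RHS terms vanish by ih
        have hTb : J (S₂ ++ [b]) (G S₂.length) = 0 := by
          have hperm : (S₂ ++ [b]).Perm (S.erase a) := by
            refine List.Perm.trans ?_ p2.symm
            have : b :: S₂ = [b] ++ S₂ := rfl
            rw [this]
            exact List.perm_append_comm
          have hlenT : (S₂ ++ [b]).length = S₂.length + 1 := by simp
          have := ih (S₂ ++ [b]) (by omega) (by simp)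
            (fun z hz => hSV z (hmemS z (by
              rcases List.mem_append.mp hz with h | h
              · simp [h]
              · simp at h; simp [h])))
            (fun c hc p hp => by
              apply hcnt c (hmemS c (by
                rcases List.mem_append.mp hc with h | h
                · simp [h]
                · simp at h; simp [h]))
              have hcount_le : (S₂ ++ [b]).count c ≤ S.count c := by
                rw [hperm.count_eq]
                exact (List.erase_sublist (a := a) (l := S)).subperm.count_le c
              omega)
          rwa [hlenT, Nat.add_sub_cancel] at this
        have hTa : J (S₂ ++ [a]) (G S₂.length) = 0 := by
          have hperm : (S₂ ++ [a]).Perm (a :: S₂) := by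
            have : a :: S₂ = [a] ++ S₂ := rfl
            rw [this]
            exact List.perm_append_comm.symm.symm
          have hsub : (a :: S₂).Sublist (a :: S.erase a) := by
            apply List.Sublist.cons₂
            exact (List.erase_sublist (a := b) (l := S.erase a))
          have hlenT : (S₂ ++ [a]).length = S₂.length + 1 := by simp
          have := ih (S₂ ++ [a]) (by omega) (by simp)
            (fun z hz => hSV z (hmemS z (by
              rcases List.mem_append.mp hz with h | h
              · simp [h]
              · simp at h; simp [h])))
            (fun c hc p hp => by
              apply hcnt c (hmemS c (by
                rcases List.mem_append.mp hc with h | h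
                · simp [h]
                · simp at h; simp [h]))
              have h1 : (S₂ ++ [a]).count c = (a :: S₂).count c := hperm.count_eq c
              have h2 : (a :: S₂).count c ≤ (a :: S.erase a).count c :=
                hsub.subperm.count_le c
              have h3 : (a :: S.erase a).count c = S.count c := (p1.count_eq c).symm
              omega)
          rwa [hlenT, Nat.add_sub_cancel] at this
        have hmul : J (S₂ ++ [a, b]) (G (S₂.length + 1)) * (b - a) = 0 := by
          rw [hrec, hTa, hTb, sub_zero]
        have hba : b - a ≠ 0 := sub_ne_zero.mpr hbne
        have hJ0 : J (S₂ ++ [a, b]) (G (S₂.length + 1)) = 0 := by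
          rcases mul_eq_zero.mp hmul with h | h
          · exact h
          · exact absurd h hba
        rw [Jperm pS (G (S.length - 1)) (hGc _)]
        rw [show S.length - 1 = S₂.length + 1 from by omega]
        exact hJ0


lemma Jrec_estimate {V : Set ℂ} (hVc : Convex ℝ V)
    (G : ℕ → ℂ → ℂ) (hGc : ∀ j, Continuous (G j))
    (hGd : ∀ j, ∀ z ∈ V, HasDerivAt (G j) (G (j+1) z) z)
    (W : List ℂ) (hWV : ∀ w ∈ W, w ∈ V)
    (x : ℂ) (hxV : x ∈ V)
    (C ℓ : ℝ) (hℓ0 : 0 ≤ ℓ)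
    (hxw : ∀ w ∈ W, ‖x - w‖ ≤ ℓ)
    (hC : ∀ z ∈ V, ‖G W.length z‖ ≤ C)
    (HZ : ∀ j, 1 ≤ j → j ≤ W.length → J (W.take j) (G (j-1)) = 0) :
    ∀ (d : ℕ), ∀ i j : ℕ, j + d = W.length → i + j ≤ W.length →
      ‖J (List.replicate (i+1) x ++ W.take j) (G (i+j))‖
        ≤ C * ℓ^(W.length - (i+j)) * ((W.length - (i+j) + i).choose i) /
            (W.length.factorial : ℝ) := by
  set n := W.length with hn
  -- the terminal case, used twice
  have terminal : ∀ i j : ℕ, i + j = n →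
      ‖J (List.replicate (i+1) x ++ W.take j) (G (i+j))‖
        ≤ C * ℓ^(n - (i+j)) * ((n - (i+j) + i).choose i) / (n.factorial : ℝ) := by
    intro i j hq
    have hjn : j ≤ n := by omega
    have hmem : ∀ z ∈ List.replicate (i+1) x ++ W.take j, z ∈ V := by
      intro z hz
      rcases List.mem_append.mp hz with h | h
      · rw [List.eq_of_mem_replicate h]; exact hxV
      · exact hWV z (List.mem_of_mem_take h)
    have hlen : (List.replicate (i+1) x ++ W.take j).length = n + 1 := by
      simp [List.length_take, min_eq_left hjn]
      omega
    have hb := Jbound hVc (List.replicate (i+1) x ++ W.take j) (G (i+j))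
      (by rw [hq]; exact hGc n) C (by rw [hq]; exact hC) (by simp) hmem
    rw [hlen] at hb
    simp only [Nat.add_sub_cancel] at hb
    have h1 : n - (i + j) = 0 := by omega
    rw [h1]
    simp only [pow_zero, Nat.zero_add, Nat.choose_self]
    calc ‖J (List.replicate (i+1) x ++ W.take j) (G (i+j))‖ ≤ C / (n.factorial : ℝ) := hb
      _ = C * 1 * (1:ℕ) / (n.factorial : ℝ) := by push_cast; ring
  intro d
  induction d with
  | zero =>
      intro i j hd hle
      exact terminal i j (by omega)
  | succ d ih =>
      intro i j hd hle
      by_cases hq : i + j = n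
      · exact terminal i j hq
      · have hqlt : i + j < n := by omega
        have hjW : j < W.length := by omega
        have hC0 : 0 ≤ C := le_trans (norm_nonneg _) (hC x hxV)
        set w := W[j]'hjW with hw
        have hwW : w ∈ W := by rw [hw]; exact List.getElem_mem hjW
        have htake : W.take (j+1) = W.take j ++ [w] := by
          rw [hw, ← List.concat_eq_append]
          exact (List.take_concat_get hjW).symm
        set l := List.replicate i x ++ W.take j with hl
        have hlV : ∀ z ∈ l, z ∈ V := by
          intro z hz
          rcases List.mem_append.mp hz with h | h
          · rw [List.eq_of_mem_replicate h]; exact hxV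
          · exact hWV z (List.mem_of_mem_take h)
        have hrec := Jrec hVc l (G (i+j)) (G (i+j+1)) (hGc _) (hGc _)
          (hGd (i+j)) hlV w (hWV w hwW) x hxV
        have eq2 : l ++ [w] = List.replicate i x ++ W.take (j+1) := by
          rw [hl, htake, List.append_assoc]
        have perm1 : (l ++ [x]).Perm (List.replicate (i+1) x ++ W.take j) := by
          rw [hl, List.replicate_succ', List.append_assoc, List.append_assoc]
          exact List.Perm.append_left _ List.perm_append_comm
        have e3 : l ++ [w, x] = List.replicate i x ++ (W.take (j+1) ++ [x]) := by
          rw [hl, htake]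
          simp [List.append_assoc]
        have perm3 : (l ++ [w, x]).Perm (List.replicate (i+1) x ++ W.take (j+1)) := by
          rw [e3, List.replicate_succ', List.append_assoc]
          exact List.Perm.append_left _ List.perm_append_comm
        rw [Jperm perm1 (G (i+j)) (hGc _), eq2, Jperm perm3 (G (i+j+1)) (hGc _)] at hrec
        have hA : J (List.replicate (i+1) x ++ W.take j) (G (i+j))
            = J (List.replicate i x ++ W.take (j+1)) (G (i+j))
              + J (List.replicate (i+1) x ++ W.take (j+1)) (G (i+j+1)) * (x - w) := by
          linear_combination -hrec
        set r := n - (i + j) with hr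
        have hr1 : 1 ≤ r := by omega
        have hrm : n - (i + (j+1)) = r - 1 := by omega
        have hCc := ih i (j+1) (by omega) (by omega)
        rw [hrm] at hCc
        have hidx : i + (j + 1) = i + j + 1 := by omega
        rw [hidx] at hCc
        have hxwle := hxw w hwW
        have hprod : ‖J (List.replicate (i+1) x ++ W.take (j+1)) (G (i+j+1)) * (x - w)‖
            ≤ (C * ℓ^(r-1) * (((r-1) + i).choose i) / (n.factorial : ℝ)) * ℓ := by
          rw [norm_mul]
          apply mul_le_mul hCc hxwle (norm_nonneg _)
          positivity
        have hpow : ℓ^(r-1) * ℓ = ℓ^r := by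
          rw [← pow_succ]
          congr 1
          omega
        rcases Nat.eq_zero_or_pos i with hi0 | hip
        · -- i = 0 : middle term vanishes by HZ
          subst hi0
          have hBz : J (List.replicate 0 x ++ W.take (j+1)) (G (0+j)) = 0 := by
            have := HZ (j+1) (by omega) (by omega)
            simpa using this
          rw [hA, hBz, zero_add]
          refine le_trans hprod (le_of_eq ?_)
          have hch1 : ((r-1) + 0).choose 0 = 1 := Nat.choose_zero_right _
          have hch2 : (r + 0).choose 0 = 1 := Nat.choose_zero_right _
          rw [hch1, hch2]
          push_cast
          rw [mul_one, mul_one, div_mul_eq_mul_div, mul_assoc, hpow]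
        · -- i = i' + 1
          obtain ⟨i', rfl⟩ : ∃ i', i = i' + 1 := ⟨i - 1, by omega⟩
          have hBidx : (i' + 1) + j = i' + (j + 1) := by omega
          have hrm2 : n - (i' + (j + 1)) = r := by omega
          have hB := ih i' (j+1) (by omega) (by omega)
          rw [hrm2] at hB
          rw [← hBidx] at hB
          rw [hA]
          have harg : (r-1) + (i'+1) = r + i' := by omega
          rw [harg] at hprod
          have hprod2 : ‖J (List.replicate (i'+1+1) x ++ W.take (j+1)) (G (i'+1+j+1)) * (x - w)‖
              ≤ C * ℓ^r * (((r + i').choose (i'+1)) : ℝ) / (n.factorial : ℝ) := by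
            refine le_trans hprod (le_of_eq ?_)
            rw [div_mul_eq_mul_div]
            rw [show C * ℓ^(r-1) * (((r + i').choose (i'+1)) : ℝ) * ℓ
              = C * (ℓ^(r-1) * ℓ) * (((r + i').choose (i'+1)) : ℝ) from by ring, hpow]
          calc ‖J (List.replicate (i'+1) x ++ W.take (j+1)) (G (i'+1+j))
                + J (List.replicate (i'+1+1) x ++ W.take (j+1)) (G (i'+1+j+1)) * (x - w)‖
              ≤ ‖J (List.replicate (i'+1) x ++ W.take (j+1)) (G (i'+1+j))‖
                + ‖J (List.replicate (i'+1+1) x ++ W.take (j+1)) (G (i'+1+j+1)) * (x - w)‖ :=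
                norm_add_le _ _
            _ ≤ C * ℓ^r * (((r + i').choose i') : ℝ) / (n.factorial : ℝ)
                + C * ℓ^r * (((r + i').choose (i'+1)) : ℝ) / (n.factorial : ℝ) :=
                add_le_add hB hprod2
            _ = C * ℓ^r * ((r + (i'+1)).choose (i'+1) : ℝ) / (n.factorial : ℝ) := by
                have hch : (r + (i'+1)).choose (i'+1)
                    = (r + i').choose i' + (r + i').choose (i'+1) := by
                  rw [show r + (i'+1) = (r + i') + 1 from by omega]
                  exact Nat.choose_succ_succ _ _
                rw [hch]
                push_cast
                ring


lemma exists_extension {A : Set ℂ} (hA : IsClosed A) {F : ℂ → ℂ} (hF : ContinuousOn F A) :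
    ∃ G : ℂ → ℂ, Continuous G ∧ Set.EqOn G F A := by
  obtain ⟨g, hg⟩ := ContinuousMap.exists_restrict_eq (Y := ℂ) hA ⟨_, hF.restrict⟩
  refine ⟨g, g.continuous, fun x hx => ?_⟩
  have := congrArg (fun φ : C(A, ℂ) => φ ⟨x, hx⟩) hg
  simpa using this

def blocks : List (ℕ × ℂ) → List ℂ
  | [] => []
  | p :: r => List.replicate p.1 p.2 ++ blocks r

lemma length_blocks : ∀ P : List (ℕ × ℂ), (blocks P).length = (P.map Prod.fst).sum
  | [] => rfl
  | p :: r => by simp [blocks, length_blocks r]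

lemma count_blocks (c : ℂ) : ∀ P : List (ℕ × ℂ),
    (blocks P).count c = (P.map (fun p => if c = p.2 then p.1 else 0)).sum
  | [] => rfl
  | p :: r => by
      classical
      simp only [blocks, List.count_append, count_blocks c r, List.count_replicate,
        List.map_cons, List.sum_cons, beq_iff_eq]
      by_cases h : c = p.2
      · simp [h]
      · rw [if_neg (fun hh : p.2 = c => h hh.symm), if_neg h]

lemma mem_blocks {c : ℂ} : ∀ {P : List (ℕ × ℂ)}, c ∈ blocks P → ∃ p ∈ P, c = p.2
  | [], h => absurd h List.not_mem_nil
  | p :: r, h => by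
      rcases List.mem_append.mp h with h | h
      · exact ⟨p, List.mem_cons_self, List.eq_of_mem_replicate h⟩
      · obtain ⟨q, hq, he⟩ := mem_blocks h
        exact ⟨q, List.mem_cons_of_mem _ hq, he⟩

end Stmt9Aux

open Stmt9Aux in
/-- If `f` is holomorphic on a bounded convex open set `U ⊆ ℂ` of diameter `ℓ`,
continuous on its closure, not identically zero, and has at least `n` zeros in
`U` counted with multiplicities, then for every `k = 0,…,n-1`,
`sup_U |f^{(n-k)}| ≤ sup_U |f^{(n)}| · ℓ^k / k!` (expressed via arbitrary upper
bounds `C` of `|f^{(n)}|` on `U`). -/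
theorem stmt9 (U : Set ℂ) (hUo : IsOpen U) (hUc : Convex ℝ U)
    (hUb : Bornology.IsBounded U) (ℓ : ℝ) (hdiam : Metric.diam U = ℓ)
    (f : ℂ → ℂ) (hf : DifferentiableOn ℂ f U) (hfc : ContinuousOn f (closure U))
    (hfne : ∃ z ∈ U, f z ≠ 0)
    (n : ℕ) (m : ℕ) (z : Fin m → ℂ) (μ : Fin m → ℕ)
    (hinj : Function.Injective z) (hzU : ∀ i, z i ∈ U)
    (hmult : ∀ i, ∀ j < μ i, iteratedDeriv j f (z i) = 0)
    (hsum : n ≤ ∑ i, μ i) :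
    ∀ k < n, ∀ C : ℝ,
      (∀ w ∈ U, ‖iteratedDeriv n f w‖ ≤ C) →
      ∀ w ∈ U, ‖iteratedDeriv (n - k) f w‖ ≤ C * ℓ ^ k / (k.factorial : ℝ) := by
  classical
  intro k hk C hC x hxU
  have hkn : k ≤ n := le_of_lt hk
  -- iterated derivatives are analytic on U
  have hF : ∀ j : ℕ, AnalyticOnNhd ℂ (iteratedDeriv j f) U := by
    intro j
    induction j with
    | zero => simpa [iteratedDeriv_zero] using hf.analyticOnNhd hUo
    | succ j ih => rw [iteratedDeriv_succ]; exact ih.deriv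
  have hFd : ∀ j : ℕ, ∀ w ∈ U, HasDerivAt (iteratedDeriv j f) (iteratedDeriv (j+1) f w) w := by
    intro j w hw
    have h1 : DifferentiableAt ℂ (iteratedDeriv j f) w := ((hF j) w hw).differentiableAt
    rw [iteratedDeriv_succ]
    exact h1.hasDerivAt
  -- compact convex core and thickenings
  set K := convexHull ℝ ({x} ∪ Set.range z) with hK
  have hKcomp : IsCompact K :=
    ((Set.finite_singleton x).union (Set.finite_range z)).isCompact_convexHull ℝ
  have hKU : K ⊆ U := by
    apply convexHull_min ?_ hUc
    rintro w (hw | ⟨i, rfl⟩)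
    · rw [Set.mem_singleton_iff] at hw; subst hw; exact hxU
    · exact hzU i
  obtain ⟨δ, hδ0, hδU⟩ := hKcomp.exists_thickening_subset_open hUo hKU
  set V := Metric.thickening (δ/2) K with hV
  set A := Metric.cthickening (δ/2) K with hA
  have hVo : IsOpen V := Metric.isOpen_thickening
  have hVc : Convex ℝ V := (convex_convexHull ℝ _).thickening _
  have hAcl : IsClosed A := Metric.isClosed_cthickening
  have hVA : V ⊆ A := Metric.thickening_subset_cthickening _ _
  have hAU : A ⊆ U := le_trans (Metric.cthickening_subset_thickening' hδ0 (by linarith) K) hδU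
  have hKV : K ⊆ V := Metric.self_subset_thickening (by linarith) K
  have hzK : ∀ i, z i ∈ K := fun i => subset_convexHull ℝ _ (Or.inr ⟨i, rfl⟩)
  have hxK : x ∈ K := subset_convexHull ℝ _ (Or.inl rfl)
  -- global continuous extensions of the iterated derivatives
  have hexts : ∀ j : ℕ, ∃ G : ℂ → ℂ, Continuous G ∧ Set.EqOn G (iteratedDeriv j f) A :=
    fun j => exists_extension hAcl (((hF j).continuousOn).mono hAU)
  choose G hGc hGeq using hexts
  have hGd : ∀ j, ∀ w ∈ V, HasDerivAt (G j) (G (j+1) w) w := by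
    intro j w hw
    have h1 := hFd j w (hAU (hVA hw))
    have h2 : G (j+1) w = iteratedDeriv (j+1) f w := hGeq (j+1) (hVA hw)
    rw [h2]
    apply h1.congr_of_eventuallyEq
    exact Filter.eventuallyEq_of_mem (hVo.mem_nhds hw) (fun y hy => hGeq j (hVA hy))
  -- the list of zeros with multiplicity
  set P : List (ℕ × ℂ) := (List.finRange m).map (fun i => (μ i, z i)) with hP
  set L : List ℂ := blocks P with hL
  have hLlen : n ≤ L.length := by
    rw [hL, length_blocks, hP, List.map_map]
    have he : (Prod.fst ∘ fun i : Fin m => ((μ i, z i) : ℕ × ℂ)) = μ := rfl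
    rw [he, ← Fin.sum_univ_def]
    exact hsum
  set W := L.take n with hW
  have hWlen : W.length = n := by rw [hW, List.length_take]; omega
  have hmemL : ∀ c ∈ L, ∃ i, c = z i := by
    intro c hc
    rw [hL] at hc
    obtain ⟨p, hp, he⟩ := mem_blocks hc
    rw [hP] at hp
    obtain ⟨i, _, rfl⟩ := List.mem_map.mp hp
    exact ⟨i, he⟩
  have hcountL : ∀ i, L.count (z i) ≤ μ i := by
    intro i
    rw [hL, count_blocks, hP, List.map_map]
    have he : ((fun p : ℕ × ℂ => if z i = p.2 then p.1 else 0) ∘ fun i' : Fin m => (μ i', z i'))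
        = fun i' => if z i = z i' then μ i' else 0 := rfl
    rw [he, ← Fin.sum_univ_def]
    apply le_of_eq
    calc (∑ i', if z i = z i' then μ i' else 0)
        = ∑ i', if i' = i then μ i' else 0 := by
          refine Finset.sum_congr rfl fun i' _ => ?_
          by_cases h : i' = i
          · simp [h]
          · rw [if_neg (fun hzz => h (hinj hzz).symm), if_neg h]
      _ = μ i := by simp
  have hWV : ∀ w ∈ W, w ∈ V := by
    intro w hw
    obtain ⟨i, hi⟩ := hmemL w (List.mem_of_mem_take (by rwa [← hW]))
    rw [hi]
    exact hKV (hzK i)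
  have hxV : x ∈ V := hKV hxK
  have hl0 : 0 ≤ ℓ := hdiam ▸ Metric.diam_nonneg
  have hxw : ∀ w ∈ W, ‖x - w‖ ≤ ℓ := by
    intro w hw
    obtain ⟨i, hi⟩ := hmemL w (List.mem_of_mem_take (by rwa [← hW]))
    have hwU : w ∈ U := by rw [hi]; exact hzU i
    calc ‖x - w‖ = dist x w := (Complex.dist_eq x w).symm
      _ ≤ Metric.diam U := Metric.dist_le_diam_of_mem hUb hxU hwU
      _ = ℓ := hdiam
  have hCV : ∀ w ∈ V, ‖G W.length w‖ ≤ C := by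
    intro w hw
    rw [hWlen, hGeq n (hVA hw)]
    have := hC w (hAU (hVA hw))
    exact this
  have hcount_take : ∀ (j : ℕ) (c : ℂ), (W.take j).count c ≤ L.count c := by
    intro j c
    calc (W.take j).count c ≤ W.count c := (List.take_sublist _ _).subperm.count_le c
      _ ≤ L.count c := by rw [hW]; exact (List.take_sublist _ _).subperm.count_le c
  have HZ : ∀ j, 1 ≤ j → j ≤ W.length → J (W.take j) (G (j-1)) = 0 := by
    intro j hj1 hjn
    have hlen : (W.take j).length = j := by
      rw [List.length_take]
      omega
    have hz0 := Jzero hVc G hGc hGd W.length (W.take j) (by omega)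
      (by intro hnil; rw [hnil] at hlen; simp at hlen; omega)
      (fun c hc => hWV c (List.mem_of_mem_take hc))
      (fun a ha p hp => by
        obtain ⟨i, hi⟩ := hmemL a (List.mem_of_mem_take (by
          rw [← hW]; exact List.mem_of_mem_take ha))
        subst hi
        rw [hGeq p (hVA (hKV (hzK i)))]
        exact hmult i p (lt_of_lt_of_le hp (le_trans (hcount_take j _) (hcountL i))))
    rwa [hlen] at hz0
  -- main estimate
  have hmain := Jrec_estimate hVc G hGc hGd W hWV x hxV C ℓ hl0 hxw hCV HZ
    n (n-k) 0 (by omega) (by omega)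
  rw [List.take_zero, List.append_nil] at hmain
  have he1 : W.length - (n - k + 0) = k := by omega
  rw [he1, show k + (n - k) = n from by omega, hWlen] at hmain
  have hch : n.choose (n - k) = n.choose k := Nat.choose_symm hkn
  rw [hch] at hmain
  -- rewrite LHS via Jreplicate
  have hJr : J (List.replicate (n - k + 1) x) (G (n - k + 0)) = G (n - k) x / (((n-k).factorial : ℕ) : ℂ) :=
    Jreplicate x (G (n - k)) (n - k)
  rw [hJr] at hmain
  rw [norm_div] at hmain
  have hnn : ‖(((n-k).factorial : ℕ) : ℂ)‖ = (((n-k).factorial : ℕ) : ℝ) := by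
    rw [Complex.norm_natCast]
  rw [hnn] at hmain
  have hGx : G (n - k) x = iteratedDeriv (n - k) f x := hGeq (n-k) (hVA hxV)
  rw [hGx] at hmain
  -- final arithmetic
  have hfacpos : (0:ℝ) < ((n-k).factorial : ℝ) := by exact_mod_cast (n-k).factorial_pos
  rw [div_le_iff₀ hfacpos] at hmain
  refine le_trans hmain (le_of_eq ?_)
  have hfact : ((n.choose k : ℕ) : ℝ) * (k.factorial : ℝ) * ((n-k).factorial : ℝ) = (n.factorial : ℝ) := by
    exact_mod_cast congrArg (Nat.cast : ℕ → ℝ) (Nat.choose_mul_factorial_mul_factorial hkn)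
  have hkfpos : (0:ℝ) < (k.factorial : ℝ) := by exact_mod_cast k.factorial_pos
  have hnfpos : (0:ℝ) < (n.factorial : ℝ) := by exact_mod_cast n.factorial_pos
  rw [div_mul_eq_mul_div, div_eq_div_iff hnfpos.ne' hkfpos.ne']
  linear_combination (C * ℓ^k) * hfact
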